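/- Let Λ be a linear trace-preserving positive map on 4×4 matrices preserving separability, λ ∈ (2/3,1), and suppose λΛ(Φ₁)+(1−λ)Λ(|01⟩⟨01|) = λΦ₁+(1−λ)Φ₃. Then with τ = (1/2)Φ₁ + (1/4)|01⟩⟨01| + (1/4)|10⟩⟨10| one has tr(Φ₁Λ(τ)) ≥ (3λ−1)/(4λ) + 1/8 > 1/2. -/

import Mathlib

open Matrix Complex BigOperators
open scoped ComplexOrder

noncomputable section

/-- Standard basis ket of ℂ⁴ -/
def ket (k : Fin 4) : Fin 4 → ℂ := fun j => if j = k then 1 else 0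

/-- Tensor product of two qubit vectors, with |ij⟩ ↦ index 2i+j -/
def tens (ψ χ : Fin 2 → ℂ) : Fin 4 → ℂ :=
  ![ψ 0 * χ 0, ψ 0 * χ 1, ψ 1 * χ 0, ψ 1 * χ 1]

/-- Outer product |v⟩⟨v| -/
def proj (v : Fin 4 → ℂ) : Matrix (Fin 4) (Fin 4) ℂ :=
  Matrix.of fun i j => v i * star (v j)

/-- A qubit vector is a unit vector -/
def unit2 (ψ : Fin 2 → ℂ) : Prop := ∑ j, Complex.normSq (ψ j) = 1

/-- The four Bell vectors -/
def Bell : Fin 4 → (Fin 4 → ℂ) :=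
  ![![1 / (Real.sqrt 2 : ℂ), 0, 0, 1 / (Real.sqrt 2 : ℂ)],
    ![1 / (Real.sqrt 2 : ℂ), 0, 0, -(1 / (Real.sqrt 2 : ℂ))],
    ![0, 1 / (Real.sqrt 2 : ℂ), 1 / (Real.sqrt 2 : ℂ), 0],
    ![0, -(1 / (Real.sqrt 2 : ℂ)), 1 / (Real.sqrt 2 : ℂ), 0]]

/-- Bell projectors Φᵢ (indexed from 0: `Phi 0` is Φ₁, etc.) -/
def Phi (i : Fin 4) : Matrix (Fin 4) (Fin 4) ℂ := proj (Bell i)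

/-- Separability of a two-qubit (4×4) matrix -/
def IsSepState (ρ : Matrix (Fin 4) (Fin 4) ℂ) : Prop :=
  ∃ (n : ℕ) (p : Fin n → ℝ) (ψ χ : Fin n → Fin 2 → ℂ),
    (∀ i, 0 ≤ p i) ∧ (∑ i, p i = 1) ∧ (∀ i, unit2 (ψ i)) ∧ (∀ i, unit2 (χ i)) ∧
    ρ = ∑ i, (p i : ℂ) • proj (tens (ψ i) (χ i))

/-- Density matrix -/
def IsState (ρ : Matrix (Fin 4) (Fin 4) ℂ) : Prop := ρ.PosSemidef ∧ ρ.trace = 1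

lemma trace_proj_mul (v : Fin 4 → ℂ) (A : Matrix (Fin 4) (Fin 4) ℂ) :
    (proj v * A).trace = star v ⬝ᵥ (A *ᵥ v) := by
  simp [Matrix.trace, Matrix.mul_apply, proj, dotProduct, Matrix.mulVec, Matrix.diag,
    Finset.mul_sum, Finset.sum_mul]
  rw [Finset.sum_comm]
  apply Finset.sum_congr rfl; intro j _
  apply Finset.sum_congr rfl; intro i _
  ring

lemma dot_proj_mulVec (v x : Fin 4 → ℂ) :
    star x ⬝ᵥ (proj v *ᵥ x) = star (star v ⬝ᵥ x) * (star v ⬝ᵥ x) := by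
  simp [proj, dotProduct, Matrix.mulVec, Finset.mul_sum, Finset.sum_mul, star_sum,
    Finset.sum_mul_sum]
  conv_rhs => rw [Finset.sum_comm]
  apply Finset.sum_congr rfl; intro j _
  apply Finset.sum_congr rfl; intro i _
  ring

lemma posSemidef_proj (v : Fin 4 → ℂ) : (proj v).PosSemidef := by
  rw [Matrix.posSemidef_iff_dotProduct_mulVec]
  constructor
  · ext i j
    simp [Matrix.conjTranspose_apply, proj, mul_comm]
  · intro x
    rw [dot_proj_mulVec]
    exact star_mul_self_nonneg _

lemma trace_proj_proj (v w : Fin 4 → ℂ) :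
    (proj v * proj w).trace = ((Complex.normSq (star w ⬝ᵥ v) : ℝ) : ℂ) := by
  rw [trace_proj_mul, dot_proj_mulVec, Complex.normSq_eq_conj_mul_self]
  rfl

lemma sqrt2_mul_self : ((Real.sqrt 2 : ℝ) : ℂ) * ((Real.sqrt 2 : ℝ) : ℂ) = 2 := by
  norm_cast
  rw [← Real.sqrt_mul_self (by norm_num : (0:ℝ) ≤ 2)]
  norm_num

lemma dot_Bell00 : star (Bell 0) ⬝ᵥ Bell 0 = 1 := by
  simp [Bell, dotProduct, Fin.sum_univ_four, Complex.star_def, map_div₀, Complex.conj_ofReal]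
  rw [← mul_inv, sqrt2_mul_self]
  norm_num

lemma dot_Bell20 : star (Bell 2) ⬝ᵥ Bell 0 = 0 := by
  simp [Bell, dotProduct, Fin.sum_univ_four]

lemma dot_Bell02 : star (Bell 0) ⬝ᵥ Bell 2 = 0 := by
  simp [Bell, dotProduct, Fin.sum_univ_four]

lemma dot_Bell22 : star (Bell 2) ⬝ᵥ Bell 2 = 1 := by
  simp [Bell, dotProduct, Fin.sum_univ_four, Complex.star_def, map_div₀, Complex.conj_ofReal]
  rw [← mul_inv, sqrt2_mul_self]
  norm_num

lemma sum_Phi : Phi 0 + Phi 1 + Phi 2 + Phi 3 = (1 : Matrix (Fin 4) (Fin 4) ℂ) := by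
  have hinv : ((Real.sqrt 2 : ℝ) : ℂ)⁻¹ * ((Real.sqrt 2 : ℝ) : ℂ)⁻¹ = 1/2 := by
    rw [← mul_inv, sqrt2_mul_self]; norm_num
  ext i j
  fin_cases i <;> fin_cases j <;>
    simp [Phi, proj, Bell, Matrix.one_apply, Complex.star_def, map_div₀, Complex.conj_ofReal] <;>
    rw [hinv] <;> norm_num

lemma trace_Phi0 : (Phi 0).trace = 1 := by
  have hinv : ((Real.sqrt 2 : ℝ) : ℂ)⁻¹ * ((Real.sqrt 2 : ℝ) : ℂ)⁻¹ = 1/2 := by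
    rw [← mul_inv, sqrt2_mul_self]; norm_num
  simp [Matrix.trace, Phi, proj, Bell, Fin.sum_univ_four, Matrix.diag, Complex.star_def,
    map_div₀, Complex.conj_ofReal]
  rw [hinv]; norm_num

lemma normSq_cs (a b c d : ℂ) :
    Complex.normSq (a * b + c * d)
      ≤ (Complex.normSq a + Complex.normSq c) * (Complex.normSq b + Complex.normSq d) := by
  have h1 : ‖a * b + c * d‖
      ≤ ‖a‖ * ‖b‖ + ‖c‖ * ‖d‖ := by
    calc ‖a * b + c * d‖ ≤ ‖a*b‖ + ‖c*d‖ :=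
          norm_add_le _ _
      _ = _ := by rw [norm_mul, norm_mul]
  have h2 : ∀ z : ℂ, Complex.normSq z = ‖z‖ ^ 2 := fun z => (Complex.sq_norm z).symm
  rw [h2, h2, h2, h2, h2]
  nlinarith [norm_nonneg (a*b+c*d), norm_nonneg a, norm_nonneg b,
    norm_nonneg c, norm_nonneg d,
    sq_nonneg (‖a‖ * ‖d‖ - ‖c‖ * ‖b‖)]

lemma normSq_half (z : ℂ) : Complex.normSq (z * (1 / (Real.sqrt 2 : ℂ))) = Complex.normSq z / 2 := by
  rw [Complex.normSq_mul]
  have : Complex.normSq (1 / (Real.sqrt 2 : ℂ)) = 1 / 2 := by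
    rw [Complex.normSq_div, Complex.normSq_one, Complex.normSq_ofReal,
      Real.mul_self_sqrt (by norm_num : (0:ℝ) ≤ 2)]
  rw [this]; ring

lemma trace_Phi_tens_le (i : Fin 4) (hi : i = 0 ∨ i = 2) (ψ χ : Fin 2 → ℂ)
    (hψ : unit2 ψ) (hχ : unit2 χ) :
    ((Phi i * proj (tens ψ χ)).trace).re ≤ 1 / 2 := by
  rw [Phi, trace_proj_proj, Complex.ofReal_re]
  have hψ' : Complex.normSq (ψ 0) + Complex.normSq (ψ 1) = 1 := by
    simpa [unit2, Fin.sum_univ_two] using hψ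
  have hχ' : Complex.normSq (χ 0) + Complex.normSq (χ 1) = 1 := by
    simpa [unit2, Fin.sum_univ_two] using hχ
  rcases hi with rfl | rfl
  · have hd : star (tens ψ χ) ⬝ᵥ Bell 0
        = (star (ψ 0) * star (χ 0) + star (ψ 1) * star (χ 1)) * (1 / (Real.sqrt 2 : ℂ)) := by
      simp [tens, Bell, dotProduct, Fin.sum_univ_four]
      ring
    rw [hd, normSq_half]
    have := normSq_cs (star (ψ 0)) (star (χ 0)) (star (ψ 1)) (star (χ 1))
    simp only [Complex.star_def, Complex.normSq_conj] at this
    simp only [Complex.star_def]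
    nlinarith [this]
  · have hd : star (tens ψ χ) ⬝ᵥ Bell 2
        = (star (ψ 0) * star (χ 1) + star (ψ 1) * star (χ 0)) * (1 / (Real.sqrt 2 : ℂ)) := by
      simp [tens, Bell, dotProduct, Fin.sum_univ_four]
      ring
    rw [hd, normSq_half]
    have := normSq_cs (star (ψ 0)) (star (χ 1)) (star (ψ 1)) (star (χ 0))
    simp only [Complex.star_def, Complex.normSq_conj] at this
    simp only [Complex.star_def]
    nlinarith [this]

lemma sep_bound (i : Fin 4) (hi : i = 0 ∨ i = 2) (σ : Matrix (Fin 4) (Fin 4) ℂ)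
    (h : IsSepState σ) : ((Phi i * σ).trace).re ≤ 1 / 2 := by
  obtain ⟨n, p, ψ, χ, hp, hp1, hψ, hχ, rfl⟩ := h
  rw [Matrix.mul_sum]
  simp only [Matrix.mul_smul, Matrix.trace_sum, Matrix.trace_smul, smul_eq_mul]
  rw [Complex.re_sum]
  calc (∑ k, ((p k : ℂ) * (Phi i * proj (tens (ψ k) (χ k))).trace).re)
      ≤ ∑ k, p k * (1/2) := by
        apply Finset.sum_le_sum
        intro k _
        rw [Complex.re_ofReal_mul]
        exact mul_le_mul_of_nonneg_left (trace_Phi_tens_le i hi (ψ k) (χ k) (hψ k) (hχ k)) (hp k)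
    _ = 1 / 2 := by rw [← Finset.sum_mul, hp1, one_mul]

lemma ket1_eq : ket 1 = tens ![1, 0] ![0, 1] := by
  funext j
  fin_cases j <;> simp [ket, tens]

lemma ket1_sep : IsSepState (proj (ket 1)) := by
  refine ⟨1, fun _ => 1, fun _ => ![1, 0], fun _ => ![0, 1], fun _ => zero_le_one, by simp,
    fun _ => ?_, fun _ => ?_, by simp [ket1_eq]⟩ <;> simp [unit2, Fin.sum_univ_two]

lemma trace_Phi_psd_nonneg (i : Fin 4) (A : Matrix (Fin 4) (Fin 4) ℂ) (hA : A.PosSemidef) :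
    0 ≤ ((Phi i * A).trace).re := by
  rw [Phi, trace_proj_mul]
  exact (Complex.nonneg_iff.mp (hA.dotProduct_mulVec_nonneg (Bell i))).1


theorem tau_image_entangled_bound
    (Λ : Matrix (Fin 4) (Fin 4) ℂ →ₗ[ℂ] Matrix (Fin 4) (Fin 4) ℂ)
    (htr : ∀ ρ, (Λ ρ).trace = ρ.trace)
    (hpos : ∀ ρ, ρ.PosSemidef → (Λ ρ).PosSemidef)
    (hne : ∀ ρ, IsSepState ρ → IsSepState (Λ ρ))
    (l : ℝ) (hl : 2 / 3 < l) (hl1 : l < 1)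
    (heq : (l : ℂ) • Λ (Phi 0) + ((1 - l : ℝ) : ℂ) • Λ (proj (ket 1))
      = (l : ℂ) • Phi 0 + ((1 - l : ℝ) : ℂ) • Phi 2) :
    (3 * l - 1) / (4 * l) + 1 / 8
        ≤ ((Phi 0 * Λ ((1 / 2 : ℂ) • Phi 0 + (1 / 4 : ℂ) • proj (ket 1)
            + (1 / 4 : ℂ) • proj (ket 2))).trace).re
      ∧ (1 / 2 : ℝ) < (3 * l - 1) / (4 * l) + 1 / 8 := by
  have hl0 : (0:ℝ) < l := by linarith
  have h4l : (0:ℝ) < 4 * l := by linarith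
  set a := ((Phi 0 * Λ (Phi 0)).trace).re with ha_def
  set b := ((Phi 0 * Λ (proj (ket 1))).trace).re with hb_def
  set c := ((Phi 0 * Λ (proj (ket 2))).trace).re with hc_def
  set u := ((Phi 2 * Λ (Phi 0)).trace).re with hu_def
  set w := ((Phi 2 * Λ (proj (ket 1))).trace).re with hw_def
  -- equation from heq multiplied by Phi 0
  have e0 := congrArg (fun M => ((Phi 0 * M).trace).re) heq
  simp only [mul_add, Matrix.mul_smul, Matrix.trace_add, Matrix.trace_smul, smul_eq_mul] at e0
  rw [show Phi 0 * Phi 0 = proj (Bell 0) * proj (Bell 0) from rfl,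
      show Phi 0 * Phi 2 = proj (Bell 0) * proj (Bell 2) from rfl,
      trace_proj_proj, trace_proj_proj, dot_Bell00, dot_Bell20] at e0
  simp only [Complex.normSq_one, Complex.normSq_zero, Complex.ofReal_one, Complex.ofReal_zero,
    mul_one, mul_zero, add_zero, Complex.add_re, Complex.re_ofReal_mul, Complex.ofReal_re] at e0
  -- e0 : l * a + (1 - l) * b = l
  -- equation from heq multiplied by Phi 2
  have e2 := congrArg (fun M => ((Phi 2 * M).trace).re) heq
  simp only [mul_add, Matrix.mul_smul, Matrix.trace_add, Matrix.trace_smul, smul_eq_mul] at e2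
  rw [show Phi 2 * Phi 0 = proj (Bell 2) * proj (Bell 0) from rfl,
      show Phi 2 * Phi 2 = proj (Bell 2) * proj (Bell 2) from rfl,
      trace_proj_proj, trace_proj_proj, dot_Bell02, dot_Bell22] at e2
  simp only [Complex.normSq_one, Complex.normSq_zero, Complex.ofReal_one, Complex.ofReal_zero,
    mul_one, mul_zero, zero_add, Complex.add_re, Complex.re_ofReal_mul, Complex.ofReal_re] at e2
  -- e2 : l * u + (1 - l) * w = 1 - l
  have hPhi0psd : (Phi 0).PosSemidef := posSemidef_proj _
  have hk2psd : (proj (ket 2)).PosSemidef := posSemidef_proj _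
  have hΛ0 := hpos _ hPhi0psd
  have hc0 : 0 ≤ c := trace_Phi_psd_nonneg 0 _ (hpos _ hk2psd)
  have ht1 : 0 ≤ ((Phi 1 * Λ (Phi 0)).trace).re := trace_Phi_psd_nonneg 1 _ hΛ0
  have ht3 : 0 ≤ ((Phi 3 * Λ (Phi 0)).trace).re := trace_Phi_psd_nonneg 3 _ hΛ0
  have hb12 : b ≤ 1/2 := sep_bound 0 (Or.inl rfl) _ (hne _ ket1_sep)
  have hw12 : w ≤ 1/2 := sep_bound 2 (Or.inr rfl) _ (hne _ ket1_sep)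
  -- total trace equation
  have hsumC : (Phi 0 * Λ (Phi 0)).trace + (Phi 1 * Λ (Phi 0)).trace
      + (Phi 2 * Λ (Phi 0)).trace + (Phi 3 * Λ (Phi 0)).trace = 1 := by
    rw [← Matrix.trace_add, ← Matrix.trace_add, ← Matrix.trace_add, ← Matrix.add_mul,
      ← Matrix.add_mul, ← Matrix.add_mul, sum_Phi, Matrix.one_mul, htr, trace_Phi0]
  have hsum : a + ((Phi 1 * Λ (Phi 0)).trace).re + u + ((Phi 3 * Λ (Phi 0)).trace).re = 1 := by
    have := congrArg Complex.re hsumC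
    simpa [Complex.add_re] using this
  -- target expression
  have hT : ((Phi 0 * Λ ((1 / 2 : ℂ) • Phi 0 + (1 / 4 : ℂ) • proj (ket 1)
      + (1 / 4 : ℂ) • proj (ket 2))).trace).re = (1/2) * a + (1/4) * b + (1/4) * c := by
    rw [map_add, map_add, LinearMap.map_smul, LinearMap.map_smul, LinearMap.map_smul]
    simp only [mul_add, Matrix.mul_smul, Matrix.trace_add, Matrix.trace_smul, smul_eq_mul,
      Complex.add_re, Complex.mul_re]
    norm_num
    rfl
  constructor
  · rw [hT]
    -- derive b ≥ 1/2
    have ht2 : (1-l)/2 ≤ l * u := by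
      nlinarith [mul_nonneg (by linarith : (0:ℝ) ≤ 1 - l) (by linarith : (0:ℝ) ≤ 1/2 - w)]
    have hau : a + u ≤ 1 := by linarith
    have hb' : 1/2 ≤ b := by nlinarith [mul_le_mul_of_nonneg_left hau hl0.le]
    have key : (3*l - 1) ≤ ((1/2) * a + (1/4) * b + (1/4) * c - 1/8) * (4*l) := by
      nlinarith [mul_nonneg hl0.le hc0, mul_nonneg (by linarith : (0:ℝ) ≤ 3*l - 2)
        (by linarith : (0:ℝ) ≤ b - 1/2)]
    have := (div_le_iff₀ h4l).mpr key
    linarith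
  · have h1 : (1/2 - 1/8) * (4*l) < 3*l - 1 := by linarith
    have := (lt_div_iff₀ h4l).mpr h1
    linarith
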